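/- arXiv:1701.04790 — 4 statements merged into one kernel-verified Lean document; each statement's English description precedes it below -/
import Mathlib

section
/- For any vertex v in a simple graph G on n vertices with deg(v) ≥ 1, the leverage centrality l(v) = (1/deg(v)) * Σ_{u ∈ N(v)} (deg(v) - deg(u))/(deg(v) + deg(u)) satisfies |l(v)| ≤ 1 - 2/n. -/
open SimpleGraph Finset

/-- Degree of a vertex (classical decidability so arbitrary graphs work). -/
noncomputable def deg {V : Type*} [Fintype V] (G : SimpleGraph V) (v : V) : ℕ :=
  letI : DecidableRel G.Adj := Classical.decRel _
  G.degree v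

/-- Neighbor finset of a vertex. -/
noncomputable def nbrs {V : Type*} [Fintype V] (G : SimpleGraph V) (v : V) : Finset V :=
  letI : DecidableRel G.Adj := Classical.decRel _
  G.neighborFinset v

/-- Leverage centrality of a vertex. -/
noncomputable def lev {V : Type*} [Fintype V] (G : SimpleGraph V) (v : V) : ℚ :=
  (1 / (deg G v : ℚ)) *
    ∑ u ∈ nbrs G v, ((deg G v : ℚ) - (deg G u : ℚ)) / ((deg G v : ℚ) + (deg G u : ℚ))

lemma key_term (a b n : ℚ) (ha : 1 ≤ a) (hb : 1 ≤ b) (han : a ≤ n - 1) (hbn : b ≤ n - 1)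
    (hn : 2 ≤ n) : |(a - b) / (a + b)| ≤ 1 - 2 / n := by
  have hab : 0 < a + b := by linarith
  have hn0 : (0:ℚ) < n := by linarith
  rw [abs_le]
  constructor
  · rw [neg_le, ← neg_div, div_le_iff₀ hab]
    have h : (1 - 2/n) * (a + b) - (b - a) = (2*a - 2*(a+b)/n) := by ring
    have : 2*(a+b)/n ≤ 2*a := by
      rw [div_le_iff₀ hn0]
      nlinarith
    nlinarith
  · rw [div_le_iff₀ hab]
    have h1 : 2*(a+b)/n ≤ 2*b := by
      rw [div_le_iff₀ hn0]
      nlinarith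
    have h2 : (1 - 2/n) * (a + b) = a + b - 2*(a+b)/n := by
      field_simp
    linarith

theorem leverage_bound {V : Type*} [Fintype V] (G : SimpleGraph V) (v : V)
    (hn : 2 ≤ Fintype.card V) (hd : 1 ≤ deg G v) :
    |lev G v| ≤ 1 - 2 / (Fintype.card V : ℚ) := by
  classical
  letI : DecidableRel G.Adj := Classical.decRel _
  set n : ℚ := (Fintype.card V : ℚ) with hnq
  have hn2 : (2:ℚ) ≤ n := by rw [hnq]; exact_mod_cast hn
  have hdq : (1:ℚ) ≤ (deg G v : ℚ) := by exact_mod_cast hd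
  have hd0 : (0:ℚ) < (deg G v : ℚ) := by linarith
  have hdegle : ∀ w : V, (deg G w : ℚ) ≤ n - 1 := by
    intro w
    have : deg G w < Fintype.card V := by
      simpa [deg] using G.degree_lt_card_verts w
    have h1 : deg G w + 1 ≤ Fintype.card V := this
    have : ((deg G w : ℚ)) + 1 ≤ n := by rw [hnq]; exact_mod_cast h1
    linarith
  have hcard : (nbrs G v).card = deg G v := by
    rfl
  have hmem : ∀ u ∈ nbrs G v, 1 ≤ deg G u := by
    intro u hu
    have hadj : G.Adj v u := by simpa [nbrs] using hu
    have : v ∈ G.neighborFinset u := by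
      rw [SimpleGraph.mem_neighborFinset]; exact hadj.symm
    have : 0 < G.degree u := by
      rw [← SimpleGraph.card_neighborFinset_eq_degree]
      exact Finset.card_pos.2 ⟨v, this⟩
    simpa [deg, Nat.one_le_iff_ne_zero, Nat.pos_iff_ne_zero] using this
  rw [lev, abs_mul, abs_of_pos (by positivity : (0:ℚ) < 1 / (deg G v : ℚ))]
  have hsum : |∑ u ∈ nbrs G v,
      ((deg G v : ℚ) - (deg G u : ℚ)) / ((deg G v : ℚ) + (deg G u : ℚ))|
      ≤ (deg G v : ℚ) * (1 - 2 / n) := by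
    calc |∑ u ∈ nbrs G v, ((deg G v : ℚ) - (deg G u : ℚ)) / ((deg G v : ℚ) + (deg G u : ℚ))|
        ≤ ∑ u ∈ nbrs G v, |((deg G v : ℚ) - (deg G u : ℚ)) / ((deg G v : ℚ) + (deg G u : ℚ))| :=
          Finset.abs_sum_le_sum_abs _ _
      _ ≤ ∑ _u ∈ nbrs G v, (1 - 2 / n) := by
          apply Finset.sum_le_sum
          intro u hu
          exact key_term _ _ _ hdq (by exact_mod_cast hmem u hu) (hdegle v) (hdegle u) hn2
      _ = (deg G v : ℚ) * (1 - 2 / n) := by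
          rw [Finset.sum_const, nsmul_eq_mul, hcard]
  calc 1 / (deg G v : ℚ) * |∑ u ∈ nbrs G v,
        ((deg G v : ℚ) - (deg G u : ℚ)) / ((deg G v : ℚ) + (deg G u : ℚ))|
      ≤ 1 / (deg G v : ℚ) * ((deg G v : ℚ) * (1 - 2 / n)) := by
        apply mul_le_mul_of_nonneg_left hsum (by positivity)
    _ = 1 - 2 / n := by field_simp
end

section
/- No finite simple graph with all vertices of positive degree has all n vertices with strictly positive leverage centrality. -/
open SimpleGraph Finset

theorem not_all_positive_leverage {V : Type*} [Fintype V] [Nonempty V]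
    (G : SimpleGraph V) (hd : ∀ v : V, 1 ≤ deg G v) :
    ¬ (∀ v : V, 0 < lev G v) := by
  classical
  intro h
  set g : V → V → ℚ := fun v u =>
    ((deg G v : ℚ) - (deg G u : ℚ)) / ((deg G v : ℚ) + (deg G u : ℚ)) with hg
  have hmem : ∀ v u : V, u ∈ nbrs G v ↔ G.Adj v u := by
    intro v u
    simp [nbrs, SimpleGraph.mem_neighborFinset]
  -- inner sums are positive
  have hSpos : ∀ v : V, 0 < ∑ u ∈ nbrs G v, g v u := by
    intro v
    have hdpos : (0 : ℚ) < (deg G v : ℚ) := by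
      exact_mod_cast Nat.lt_of_lt_of_le Nat.zero_lt_one (hd v)
    have hlev := h v
    rw [lev] at hlev
    by_contra hle
    push_neg at hle
    have : (1 / (deg G v : ℚ)) *
        (∑ u ∈ nbrs G v, ((deg G v : ℚ) - (deg G u : ℚ)) / ((deg G v : ℚ) + (deg G u : ℚ))) ≤ 0 :=
      mul_nonpos_of_nonneg_of_nonpos (by positivity) hle
    linarith
  -- double sum is zero by antisymmetry
  have hrw : ∀ v : V, ∑ u ∈ nbrs G v, g v u
      = ∑ u : V, if G.Adj v u then g v u else 0 := by
    intro v
    rw [← Finset.sum_filter]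
    apply Finset.sum_congr
    · ext u; simp [hmem v u]
    · intros; rfl
  have hanti : ∀ v u : V, g u v = - g v u := by
    intro v u
    rw [hg]
    simp only [add_comm (deg G u : ℚ) (deg G v : ℚ)]
    rw [← neg_div]
    ring_nf
  have hzero : ∑ v : V, ∑ u ∈ nbrs G v, g v u = 0 := by
    have key : (∑ v : V, ∑ u : V, if G.Adj v u then g v u else 0)
        = - ∑ v : V, ∑ u : V, if G.Adj v u then g v u else 0 := by
      conv_lhs => rw [Finset.sum_comm]
      rw [← Finset.sum_neg_distrib]
      apply Finset.sum_congr rfl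
      intro v _
      rw [← Finset.sum_neg_distrib]
      apply Finset.sum_congr rfl
      intro u _
      by_cases hadj : G.Adj v u
      · rw [if_pos hadj.symm, if_pos hadj, hanti v u]
      · rw [if_neg (fun h' => hadj h'.symm), if_neg hadj, neg_zero]
    simp only [hrw]
    linarith [key]
  have : 0 < ∑ v : V, ∑ u ∈ nbrs G v, g v u :=
    Finset.sum_pos (fun v _ => hSpos v) Finset.univ_nonempty
  linarith
end

section
/- For each n ≥ 11 there exists a graph on n vertices in which exactly n-1 vertices have strictly positive leverage centrality: take vertices v_1,...,v_n with edges {v_i v_j : 1 ≤ i < j ≤ n-4} ∪ {v_i v_j : 1 ≤ i ≤ n-4, n-3 ≤ j ≤ n-1} ∪ {v_i v_n : n-3 ≤ i ≤ n-1}. In this graph, l(v_i) > 0 for 1 ≤ i ≤ n-1. -/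
open SimpleGraph Finset

theorem exists_graph_n_sub_one_positive (n : ℕ) (hn : 11 ≤ n)
    (G : SimpleGraph (Fin n))
    (hG : ∀ a b : Fin n, G.Adj a b ↔ a ≠ b ∧
      (((a : ℕ) < n - 4 ∧ (b : ℕ) < n - 4) ∨
       ((a : ℕ) < n - 4 ∧ n - 4 ≤ (b : ℕ) ∧ (b : ℕ) < n - 1) ∨
       ((b : ℕ) < n - 4 ∧ n - 4 ≤ (a : ℕ) ∧ (a : ℕ) < n - 1) ∨
       (n - 4 ≤ (a : ℕ) ∧ (a : ℕ) < n - 1 ∧ (b : ℕ) = n - 1) ∨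
       (n - 4 ≤ (b : ℕ) ∧ (b : ℕ) < n - 1 ∧ (a : ℕ) = n - 1))) :
    ∀ i : Fin n, (i : ℕ) < n - 1 → 0 < lev G i := by
  obtain ⟨a, hav⟩ : ∃ a : Fin n, (a : ℕ) = n - 4 := ⟨⟨n - 4, by omega⟩, rfl⟩
  obtain ⟨b, hbv⟩ : ∃ b : Fin n, (b : ℕ) = n - 1 := ⟨⟨n - 1, by omega⟩, rfl⟩
  have hmem : ∀ v u : Fin n, u ∈ nbrs G v ↔ G.Adj v u := by
    intro v u
    simp [nbrs, SimpleGraph.mem_neighborFinset]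
  have hdeg : ∀ v : Fin n, deg G v = (nbrs G v).card := fun v => rfl
  -- neighbor sets
  have hnb_big : ∀ v : Fin n, (v : ℕ) < n - 4 → nbrs G v = (Iio b).erase v := by
    intro v hv
    ext u
    rw [hmem, hG]
    simp only [mem_erase, mem_Iio, Fin.lt_def, ne_eq, Fin.ext_iff, hbv]
    omega
  have hnb_mid : ∀ v : Fin n, n - 4 ≤ (v : ℕ) → (v : ℕ) < n - 1 →
      nbrs G v = insert b (Iio a) := by
    intro v hv1 hv2
    ext u
    rw [hmem, hG]
    simp only [mem_insert, mem_Iio, Fin.lt_def, ne_eq, Fin.ext_iff, hbv, hav]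
    omega
  have hnb_last : nbrs G b = Ico a b := by
    ext u
    rw [hmem, hG]
    simp only [mem_Ico, Fin.lt_def, Fin.le_def, ne_eq, Fin.ext_iff, hbv, hav,
      eq_self_iff_true, and_true, true_and]
    omega
  -- degrees
  have hdeg_big : ∀ v : Fin n, (v : ℕ) < n - 4 → deg G v = n - 2 := by
    intro v hv
    rw [hdeg, hnb_big v hv, card_erase_of_mem (by simp [mem_Iio, Fin.lt_def, hbv]; omega),
      Fin.card_Iio, hbv]
    omega
  have hab : b ∉ Iio a := by simp [mem_Iio, Fin.lt_def, hav, hbv]; omega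
  have hdeg_mid : ∀ v : Fin n, n - 4 ≤ (v : ℕ) → (v : ℕ) < n - 1 → deg G v = n - 3 := by
    intro v hv1 hv2
    rw [hdeg, hnb_mid v hv1 hv2, card_insert_of_notMem hab, Fin.card_Iio, hav]
    omega
  have hdeg_last : deg G b = 3 := by
    rw [hdeg, hnb_last, Fin.card_Ico, hav, hbv]
    omega
  -- rational casts
  have hq : (11 : ℚ) ≤ (n : ℚ) := by exact_mod_cast hn
  have hq_big : ∀ v : Fin n, (v : ℕ) < n - 4 → (deg G v : ℚ) = (n : ℚ) - 2 := by
    intro v hv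
    rw [hdeg_big v hv, Nat.cast_sub (by omega)]
    norm_num
  have hq_mid : ∀ v : Fin n, n - 4 ≤ (v : ℕ) → (v : ℕ) < n - 1 →
      (deg G v : ℚ) = (n : ℚ) - 3 := by
    intro v hv1 hv2
    rw [hdeg_mid v hv1 hv2, Nat.cast_sub (by omega)]
    norm_num
  have hq_last : (deg G b : ℚ) = 3 := by rw [hdeg_last]; norm_num
  intro i hi
  rcases lt_or_ge (i : ℕ) (n - 4) with hbig | hmid
  · -- big vertex
    rw [lev, hnb_big i hbig]
    apply mul_pos
    · rw [hq_big i hbig, one_div]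
      apply inv_pos.mpr
      linarith
    · apply Finset.sum_pos'
      · intro u hu
        rcases lt_or_ge (u : ℕ) (n - 4) with hu' | hu'
        · rw [hq_big i hbig, hq_big u hu']
          simp
        · have hu1 : (u : ℕ) < n - 1 := by
            simp only [mem_erase, mem_Iio, Fin.lt_def, hbv] at hu
            omega
          rw [hq_big i hbig, hq_mid u hu' hu1]
          apply div_nonneg <;> linarith
      · refine ⟨a, ?_, ?_⟩
        · simp only [mem_erase, mem_Iio, Fin.lt_def, ne_eq, Fin.ext_iff, hav, hbv]
          omega
        · rw [hq_big i hbig, hq_mid a (by omega) (by omega)]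
          apply div_pos <;> linarith
  · -- mid vertex
    rw [lev, hnb_mid i hmid hi, Finset.sum_insert hab]
    have hdi : (deg G i : ℚ) = (n : ℚ) - 3 := hq_mid i hmid hi
    have e1 : ((deg G i : ℚ) - (deg G b : ℚ)) / ((deg G i : ℚ) + (deg G b : ℚ)) =
        ((n : ℚ) - 6) / (n : ℚ) := by
      rw [hdi, hq_last]
      congr 1 <;> ring
    have hconst : ∀ u ∈ Iio a,
        ((deg G i : ℚ) - (deg G u : ℚ)) / ((deg G i : ℚ) + (deg G u : ℚ)) =
          -(1 / (2 * (n : ℚ) - 5)) := by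
      intro u hu
      have hu' : (u : ℕ) < n - 4 := by
        simp only [mem_Iio, Fin.lt_def, hav] at hu
        exact hu
      rw [hdi, hq_big u hu',
        show (n : ℚ) - 3 - ((n : ℚ) - 2) = -1 by ring,
        show (n : ℚ) - 3 + ((n : ℚ) - 2) = 2 * (n : ℚ) - 5 by ring, neg_div, one_div]
    have e2 : ∑ u ∈ Iio a, ((deg G i : ℚ) - (deg G u : ℚ)) / ((deg G i : ℚ) + (deg G u : ℚ)) =
        ((n : ℚ) - 4) * (-(1 / (2 * (n : ℚ) - 5))) := by
      rw [Finset.sum_congr rfl hconst, Finset.sum_const, Fin.card_Iio, hav,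
        nsmul_eq_mul, Nat.cast_sub (by omega)]
      norm_num
    rw [e1, e2, hdi]
    apply mul_pos
    · rw [one_div]
      apply inv_pos.mpr
      linarith
    · have key : ((n : ℚ) - 6) / (n : ℚ) + ((n : ℚ) - 4) * (-(1 / (2 * (n : ℚ) - 5))) =
          (((n : ℚ) - 10) * ((n : ℚ) - 3)) / ((n : ℚ) * (2 * (n : ℚ) - 5)) := by
        have hn0 : (n : ℚ) ≠ 0 := by linarith
        have hn5 : 2 * (n : ℚ) - 5 ≠ 0 := by linarith
        rw [show ((n : ℚ) - 4) * (-(1 / (2 * (n : ℚ) - 5))) = (-((n : ℚ) - 4)) / (2 * (n : ℚ) - 5) by ring,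
          div_add_div _ _ hn0 hn5]
        ring
      rw [key]
      apply div_pos <;> nlinarith
end

section
/- Every vertex of a finite simple graph G (with minimum degree ≥ 1) has leverage centrality 0 if and only if every edge of G joins two vertices of equal degree. -/
open SimpleGraph Finset

lemma mem_nbrs {V : Type*} [Fintype V] (G : SimpleGraph V) (u v : V) :
    u ∈ nbrs G v ↔ G.Adj v u := by
  classical
  simp [nbrs, SimpleGraph.mem_neighborFinset]

theorem leverage_all_zero_iff {V : Type*} [Fintype V] (G : SimpleGraph V)
    (hd : ∀ v : V, 1 ≤ deg G v) :
    (∀ v : V, lev G v = 0) ↔ (∀ u v : V, G.Adj u v → deg G u = deg G v) := by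
  classical
  constructor
  · intro h
    by_contra hbad
    push_neg at hbad
    set S : Finset V := univ.filter (fun v => ∃ u, G.Adj v u ∧ deg G u ≠ deg G v) with hS
    have hSne : S.Nonempty := by
      obtain ⟨a, b, hab, hne⟩ := hbad
      exact ⟨a, by simp [hS]; exact ⟨b, hab, fun e => hne e.symm⟩⟩
    obtain ⟨v, hvS, hvmax⟩ := S.exists_max_image (deg G) hSne
    have hdv : (0 : ℚ) < (deg G v : ℚ) := by
      exact_mod_cast Nat.lt_of_lt_of_le Nat.zero_lt_one (hd v)
    -- all neighbors have deg ≤ deg v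
    have hle : ∀ u ∈ nbrs G v, deg G u ≤ deg G v := by
      intro u hu
      by_contra hgt
      push_neg at hgt
      have huS : u ∈ S := by
        simp only [hS, mem_filter, mem_univ, true_and]
        exact ⟨v, ((mem_nbrs G u v).mp hu).symm, Nat.ne_of_lt hgt⟩
      exact absurd (hvmax u huS) (Nat.not_le.mpr hgt)
    have hsum : ∑ u ∈ nbrs G v,
        ((deg G v : ℚ) - (deg G u : ℚ)) / ((deg G v : ℚ) + (deg G u : ℚ)) = 0 := by
      have := h v
      unfold lev at this
      rcases mul_eq_zero.mp this with h1 | h2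
      · exact absurd h1 (by positivity)
      · exact h2
    have hnonneg : ∀ u ∈ nbrs G v,
        (0:ℚ) ≤ ((deg G v : ℚ) - (deg G u : ℚ)) / ((deg G v : ℚ) + (deg G u : ℚ)) := by
      intro u hu
      apply div_nonneg
      · have := hle u hu
        have : (deg G u : ℚ) ≤ (deg G v : ℚ) := by exact_mod_cast this
        linarith
      · positivity
    have hzero := (Finset.sum_eq_zero_iff_of_nonneg hnonneg).mp hsum
    -- so every neighbor has equal degree
    have hall : ∀ u, G.Adj v u → deg G u = deg G v := by
      intro u hadj
      have hu : u ∈ nbrs G v := (mem_nbrs G u v).mpr hadj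
      have := hzero u hu
      have hden : (0:ℚ) < (deg G v : ℚ) + (deg G u : ℚ) := by positivity
      have hnum : (deg G v : ℚ) - (deg G u : ℚ) = 0 := by
        by_contra hne
        exact hne (by field_simp at this; linarith [this])
      have : (deg G u : ℚ) = (deg G v : ℚ) := by linarith
      exact_mod_cast this
    simp only [hS, mem_filter, mem_univ, true_and] at hvS
    obtain ⟨u, hadj, hne⟩ := hvS
    exact hne (hall u hadj)
  · intro h v
    unfold lev
    rw [Finset.sum_eq_zero, mul_zero]
    intro u hu
    have hadj := (mem_nbrs G u v).mp hu
    rw [h v u hadj]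
    simp
end
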